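/- arXiv:1912.01537 — 2 statements merged into one kernel-verified Lean document; each statement's English description precedes it below -/
import Mathlib

section
/- Let n > 0, α > 0, and let L : (0,∞) → ℝ be non-decreasing. Suppose x : [t₀,∞) → (0,∞) is a C¹ solution of x'(t) = x(t)·(L(x(t)) − n/(α t)) on [t₀,∞) with t₀ > 0. If x'(t₂) > 0 for some t₂ ≥ t₀, then x'(t) > 0 for all t ≥ t₂. -/
open Set

/-- for a positive C¹ solution `x` of `x' = x (L(x) − n/(α t))` on `[t₀,∞)`
with `L` non-decreasing on `(0,∞)`, if `x'(t₂) > 0` for some `t₂ ≥ t₀` then `x'(t) > 0`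
for all `t ≥ t₂`. -/
theorem stmt5 (n α t₀ t₂ : ℝ) (L : ℝ → ℝ) (x x' : ℝ → ℝ)
    (hn : 0 < n) (hα : 0 < α) (ht₀ : 0 < t₀)
    (hL : ∀ u v : ℝ, 0 < u → u ≤ v → L u ≤ L v)
    (hxpos : ∀ t : ℝ, t₀ ≤ t → 0 < x t)
    (hderiv : ∀ t : ℝ, t₀ ≤ t → HasDerivAt x (x' t) t)
    (hcont : ContinuousOn x' (Ici t₀))
    (hode : ∀ t : ℝ, t₀ ≤ t → x' t = x t * (L (x t) - n / (α * t)))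
    (ht₂ : t₀ ≤ t₂)
    (hpos₂ : 0 < x' t₂) :
    ∀ t : ℝ, t₂ ≤ t → 0 < x' t := by
  by_contra hcon
  push_neg at hcon
  obtain ⟨T, hT₂, hT⟩ := hcon
  -- the set of bad times
  set S : Set ℝ := Ici t₂ ∩ x' ⁻¹' Iic 0 with hS
  have hSne : S.Nonempty := ⟨T, hT₂, hT⟩
  have hSbdd : BddBelow S := ⟨t₂, fun a ha => ha.1⟩
  have hSclosed : IsClosed S :=
    (hcont.mono (Ici_subset_Ici.2 ht₂)).preimage_isClosed_of_isClosed
      isClosed_Ici isClosed_Iic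
  set s := sInf S with hs
  have hsS : s ∈ S := hSclosed.csInf_mem hSne hSbdd
  have hst₂ : t₂ ≤ s := hsS.1
  have hs0 : x' s ≤ 0 := hsS.2
  have hst₀ : t₀ ≤ s := le_trans ht₂ hst₂
  have hsgt : t₂ < s := by
    rcases lt_or_eq_of_le hst₂ with h | h
    · exact h
    · rw [h] at hpos₂; linarith
  -- x' > 0 on [t₂, s)
  have hpos : ∀ u, t₂ ≤ u → u < s → 0 < x' u := by
    intro u h1 h2
    by_contra hle
    push_neg at hle
    exact absurd (csInf_le hSbdd ⟨h1, hle⟩) (not_le.2 h2)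
  -- x is strictly monotone on [t₂, s]
  have hmono : StrictMonoOn x (Icc t₂ s) := by
    apply strictMonoOn_of_deriv_pos (convex_Icc _ _)
    · intro u hu
      exact ((hderiv u (le_trans ht₂ hu.1)).continuousAt).continuousWithinAt
    · intro u hu
      rw [interior_Icc] at hu
      rw [(hderiv u (le_trans ht₂ (le_of_lt hu.1))).deriv]
      exact hpos u (le_of_lt hu.1) hu.2
  have hxle : x t₂ ≤ x s := le_of_lt (hmono ⟨le_refl _, le_of_lt hsgt⟩ ⟨le_of_lt hsgt, le_refl _⟩ hsgt)
  have hx₂pos : 0 < x t₂ := hxpos t₂ ht₂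
  -- from x' t₂ > 0 : L (x t₂) - n/(α t₂) > 0
  have hfac : 0 < L (x t₂) - n / (α * t₂) := by
    have := hode t₂ ht₂
    nlinarith [hpos₂, hx₂pos]
  have ht₂pos : 0 < t₂ := lt_of_lt_of_le ht₀ ht₂
  have hspos : 0 < s := lt_trans ht₂pos hsgt
  have hdiv : n / (α * s) < n / (α * t₂) :=
    div_lt_div_of_pos_left hn (by positivity) (by nlinarith)
  have hLle : L (x t₂) ≤ L (x s) := hL _ _ hx₂pos hxle
  have : 0 < x' s := by
    rw [hode s hst₀]
    have : 0 < L (x s) - n / (α * s) := by linarith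
    exact mul_pos (hxpos s hst₀) this
  linarith
end

section
/- Let n ≥ 1, α > 0, t₀ > 0, κ > 0, and let f : (0,∞) → (0,∞) be locally Lipschitz and non-decreasing. Suppose z : [t₀,∞) → (0,∞) is continuous and satisfies z(t) ≥ κ t^{−n/α} + κ ∫_{t₀}^t (t/s)^{−n/α} f(z(s)) ds for all t ≥ t₀, and suppose every solution of x' = f(x) − (n/(α t)) x with positive initial data at positive initial time blows up in finite time. Then no such globally defined z exists; i.e., the integral inequality has no solution finite on all of [t₀,∞). -/
open Set Real MeasureTheory intervalIntegral

noncomputable def seq19 (t₀ κ p : ℝ) (f z : ℝ → ℝ) : ℕ → ℝ → ℝ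
  | 0 => z
  | k + 1 => fun t => κ * t ^ (-p) * (1 + ∫ s in t₀..t, s ^ p * f (seq19 t₀ κ p f z k s))


/-- if every positive solution of the ODE `x' = f(x) − (n/(α t)) x`
(with positive initial data at positive initial time) blows up in finite time, i.e. no
such solution is globally defined, then there is no continuous positive `z` on `[t₀,∞)`
satisfying the integral inequality
`z(t) ≥ κ t^{−n/α} + κ ∫_{t₀}^t (t/s)^{−n/α} f(z(s)) ds`. -/
theorem stmt19 (n α t₀ κ : ℝ) (f : ℝ → ℝ) (z : ℝ → ℝ)
    (hn : 1 ≤ n) (hα : 0 < α) (ht₀ : 0 < t₀) (hκ : 0 < κ)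
    (hlip : LocallyLipschitzOn (Ioi (0 : ℝ)) f)
    (hmono : ∀ u v : ℝ, 0 < u → u ≤ v → f u ≤ f v)
    (hfpos : ∀ u : ℝ, 0 < u → 0 < f u)
    (hblow : ∀ t₁ x₀ : ℝ, 0 < t₁ → 0 < x₀ →
      ∀ x : ℝ → ℝ, x t₁ = x₀ → (∀ t : ℝ, t₁ ≤ t → 0 < x t) →
        (∀ t : ℝ, t₁ ≤ t → HasDerivAt x (f (x t) - n / (α * t) * x t) t) → False)
    (hz_cont : ContinuousOn z (Ici t₀))
    (hz_pos : ∀ t : ℝ, t₀ ≤ t → 0 < z t)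
    (hz_ineq : ∀ t : ℝ, t₀ ≤ t →
      κ * t ^ (-(n / α)) + κ * ∫ s in t₀..t, (t / s) ^ (-(n / α)) * f (z s) ≤ z t) :
    False := by
  set p : ℝ := n / α with hp_def
  have hp : 0 < p := div_pos (lt_of_lt_of_le one_pos hn) hα
  have hfc : ContinuousOn f (Ioi 0) := hlip.continuousOn
  set S : ℕ → ℝ → ℝ := seq19 t₀ κ p f z with hS_def
  -- positivity of rpow
  have hrpos : ∀ t : ℝ, 0 < t → ∀ q : ℝ, (0:ℝ) < t ^ q := fun t ht q => Real.rpow_pos_of_pos ht q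
  -- continuity of s ↦ s^p * f (u s) for admissible u
  have hIc : ∀ u : ℝ → ℝ, ContinuousOn u (Ici t₀) → (∀ s, t₀ ≤ s → 0 < u s) →
      ContinuousOn (fun s => s ^ p * f (u s)) (Ici t₀) := by
    intro u hu hupos
    apply ContinuousOn.mul
    · intro s hs
      exact (Real.continuousAt_rpow_const s p
        (Or.inl (ne_of_gt (lt_of_lt_of_le ht₀ hs)))).continuousWithinAt
    · exact hfc.comp hu (fun s hs => mem_Ioi.2 (hupos s hs))
  have hII : ∀ u : ℝ → ℝ, ContinuousOn (fun s => s ^ p * f (u s)) (Ici t₀) →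
      ∀ t, t₀ ≤ t → IntervalIntegrable (fun s => s ^ p * f (u s)) volume t₀ t := by
    intro u hu t ht
    apply ContinuousOn.intervalIntegrable
    rw [uIcc_of_le ht]
    exact hu.mono (Icc_subset_Ici_self)
  -- primitive continuity
  have hPrim : ∀ g : ℝ → ℝ, ContinuousOn g (Ici t₀) →
      ContinuousOn (fun t => ∫ s in t₀..t, g s) (Ici t₀) := by
    intro g hg t ht
    have ht1 : t₀ ≤ t + 1 := le_trans ht (by linarith)
    have hint : IntegrableOn g (uIcc t₀ (t + 1)) volume := by
      rw [uIcc_of_le ht1]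
      exact (hg.mono (Icc_subset_Ici_self)).integrableOn_Icc
    have h1 : ContinuousWithinAt (fun t => ∫ s in t₀..t, g s) (uIcc t₀ (t+1)) t :=
      (continuousOn_primitive_interval hint) t (by rw [uIcc_of_le ht1]; exact ⟨ht, by linarith⟩)
    apply h1.mono_of_mem_nhdsWithin
    rw [uIcc_of_le ht1, ← Ici_inter_Iic]
    exact Filter.inter_mem self_mem_nhdsWithin
      (mem_nhdsWithin_of_mem_nhds (Iic_mem_nhds (by linarith)))
  -- hz_ineq in product form
  have hz_ineq' : ∀ t : ℝ, t₀ ≤ t →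
      κ * t ^ (-p) * (1 + ∫ s in t₀..t, s ^ p * f (z s)) ≤ z t := by
    intro t ht
    have htpos : (0:ℝ) < t := lt_of_lt_of_le ht₀ ht
    have hcongr : ∫ s in t₀..t, (t / s) ^ (-p) * f (z s)
        = ∫ s in t₀..t, t ^ (-p) * (s ^ p * f (z s)) := by
      apply intervalIntegral.integral_congr
      intro s hs
      rw [uIcc_of_le ht] at hs
      have hspos : (0:ℝ) < s := lt_of_lt_of_le ht₀ hs.1
      have : (t / s) ^ (-p) = t ^ (-p) * s ^ p := by
        rw [Real.div_rpow htpos.le hspos.le, Real.rpow_neg hspos.le p,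
          div_inv_eq_mul]
      simp only [this]; ring
    have := hz_ineq t ht
    rw [hcongr, intervalIntegral.integral_const_mul] at this
    calc κ * t ^ (-p) * (1 + ∫ s in t₀..t, s ^ p * f (z s))
        = κ * t ^ (-p) + κ * (t ^ (-p) * ∫ s in t₀..t, s ^ p * f (z s)) := by ring
      _ ≤ z t := this
  -- nonneg of the integral
  have hInn : ∀ u : ℝ → ℝ, ContinuousOn u (Ici t₀) → (∀ s, t₀ ≤ s → 0 < u s) →
      ∀ t, t₀ ≤ t → 0 ≤ ∫ s in t₀..t, s ^ p * f (u s) := by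
    intro u _ hupos t ht
    apply intervalIntegral.integral_nonneg ht
    intro s hs
    exact mul_nonneg (hrpos s (lt_of_lt_of_le ht₀ hs.1) p).le
      (hfpos _ (hupos s hs.1)).le
  -- monotonicity of the operator
  have hTmono : ∀ u v : ℝ → ℝ, ContinuousOn u (Ici t₀) → ContinuousOn v (Ici t₀) →
      (∀ s, t₀ ≤ s → 0 < u s) → (∀ s, t₀ ≤ s → u s ≤ v s) → ∀ t, t₀ ≤ t →
      κ * t ^ (-p) * (1 + ∫ s in t₀..t, s ^ p * f (u s))
        ≤ κ * t ^ (-p) * (1 + ∫ s in t₀..t, s ^ p * f (v s)) := by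
    intro u v hu hv hupos huv t ht
    have hvpos : ∀ s, t₀ ≤ s → 0 < v s := fun s hs => lt_of_lt_of_le (hupos s hs) (huv s hs)
    apply mul_le_mul_of_nonneg_left _ (mul_nonneg hκ.le (hrpos t (lt_of_lt_of_le ht₀ ht) _).le)
    apply add_le_add (le_refl _)
    apply intervalIntegral.integral_mono_on ht (hII u (hIc u hu hupos) t ht)
      (hII v (hIc v hv hvpos) t ht)
    intro s hs
    exact mul_le_mul_of_nonneg_left
      (hmono _ _ (hupos s hs.1) (huv s hs.1)) (hrpos s (lt_of_lt_of_le ht₀ hs.1) p).le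
  -- invariants
  have hInv : ∀ k : ℕ, ContinuousOn (S k) (Ici t₀) ∧
      (∀ t, t₀ ≤ t → κ * t ^ (-p) ≤ S k t ∧ S k t ≤ z t) := by
    intro k
    induction k with
    | zero =>
      refine ⟨hz_cont, fun t ht => ⟨?_, le_rfl⟩⟩
      show κ * t ^ (-p) ≤ z t
      have h1 := hz_ineq' t ht
      have h2 := hInn z hz_cont hz_pos t ht
      have h3 : (0:ℝ) < κ * t ^ (-p) :=
        mul_pos hκ (hrpos t (lt_of_lt_of_le ht₀ ht) _)
      nlinarith [mul_nonneg h3.le h2]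
    | succ k ih =>
      obtain ⟨ihc, ihb⟩ := ih
      have hkpos : ∀ s, t₀ ≤ s → 0 < S k s := fun s hs =>
        lt_of_lt_of_le (mul_pos hκ (hrpos s (lt_of_lt_of_le ht₀ hs) _)) (ihb s hs).1
      have hSk1 : S (k+1) = fun t => κ * t ^ (-p) * (1 + ∫ s in t₀..t, s ^ p * f (S k s)) := by
        simp only [hS_def]; rfl
      constructor
      · rw [hSk1]
        apply ContinuousOn.mul
        · apply ContinuousOn.mul continuousOn_const
          intro s hs
          exact (Real.continuousAt_rpow_const s (-p)
            (Or.inl (ne_of_gt (lt_of_lt_of_le ht₀ hs)))).continuousWithinAt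
        · exact continuousOn_const.add (hPrim _ (hIc (S k) ihc hkpos))
      · intro t ht
        rw [show S (k+1) t = κ * t ^ (-p) * (1 + ∫ s in t₀..t, s ^ p * f (S k s)) from congrFun hSk1 t]
        constructor
        · have h2 := hInn (S k) ihc hkpos t ht
          have h3 : (0:ℝ) < κ * t ^ (-p) :=
            mul_pos hκ (hrpos t (lt_of_lt_of_le ht₀ ht) _)
          nlinarith [mul_nonneg h3.le h2]
        · calc κ * t ^ (-p) * (1 + ∫ s in t₀..t, s ^ p * f (S k s))
              ≤ κ * t ^ (-p) * (1 + ∫ s in t₀..t, s ^ p * f (z s)) :=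
                hTmono (S k) z ihc hz_cont hkpos (fun s hs => (ihb s hs).2) t ht
            _ ≤ z t := hz_ineq' t ht
  have hSpos : ∀ k : ℕ, ∀ s, t₀ ≤ s → 0 < S k s := fun k s hs =>
    lt_of_lt_of_le (mul_pos hκ (hrpos s (lt_of_lt_of_le ht₀ hs) _)) ((hInv k).2 s hs).1
  -- antitone
  have hstep : ∀ k : ℕ, ∀ t, t₀ ≤ t → S (k+1) t ≤ S k t := by
    intro k
    induction k with
    | zero =>
      intro t ht
      calc S 1 t = κ * t ^ (-p) * (1 + ∫ s in t₀..t, s ^ p * f (z s)) := rfl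
        _ ≤ z t := hz_ineq' t ht
    | succ k ih =>
      intro t ht
      exact hTmono (S (k+1)) (S k) (hInv (k+1)).1 (hInv k).1 (hSpos (k+1)) (fun s hs => ih s hs) t ht
  have hanti : ∀ t, t₀ ≤ t → Antitone (fun k => S k t) := by
    intro t ht
    exact antitone_nat_of_succ_le (fun k => hstep k t ht)
  -- the limit function
  set x : ℝ → ℝ := fun t => ⨅ k, S k t with hx_def
  have hbdd : ∀ t, t₀ ≤ t → BddBelow (range fun k => S k t) := by
    intro t ht
    exact ⟨κ * t ^ (-p), by rintro _ ⟨k, rfl⟩; exact ((hInv k).2 t ht).1⟩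
  have hx_tendsto : ∀ t, t₀ ≤ t → Filter.Tendsto (fun k => S k t) Filter.atTop (nhds (x t)) :=
    fun t ht => tendsto_atTop_ciInf (hanti t ht) (hbdd t ht)
  have hx_lb : ∀ t, t₀ ≤ t → κ * t ^ (-p) ≤ x t :=
    fun t ht => le_ciInf fun k => ((hInv k).2 t ht).1
  have hx_pos : ∀ t, t₀ ≤ t → 0 < x t := fun t ht =>
    lt_of_lt_of_le (mul_pos hκ (hrpos t (lt_of_lt_of_le ht₀ ht) _)) (hx_lb t ht)
  have hx_le : ∀ k : ℕ, ∀ t, t₀ ≤ t → x t ≤ S k t := fun k t ht => ciInf_le (hbdd t ht) k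
  have hx_ub : ∀ t, t₀ ≤ t → x t ≤ z t := fun t ht => hx_le 0 t ht
  have hsub : ∀ t, t₀ ≤ t → uIoc t₀ t ⊆ Ici t₀ := by
    intro t ht
    rw [uIoc_of_le ht]
    exact fun s hs => hs.1.le
  -- measurability of iterate integrands
  have hmeas_Sk : ∀ t, t₀ ≤ t → ∀ k : ℕ, AEStronglyMeasurable (fun s => s ^ p * f (S k s))
      (volume.restrict (uIoc t₀ t)) := by
    intro t ht k
    exact ((hIc (S k) (hInv k).1 (hSpos k)).mono (hsub t ht)).aestronglyMeasurable
      measurableSet_uIoc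
  -- pointwise convergence of integrands
  have hlim_int : ∀ t, t₀ ≤ t → ∀ s ∈ uIoc t₀ t,
      Filter.Tendsto (fun k => s ^ p * f (S k s)) Filter.atTop (nhds (s ^ p * f (x s))) := by
    intro t ht s hs
    have hs' : t₀ ≤ s := hsub t ht hs
    have hfx : ContinuousAt f (x s) := hfc.continuousAt (Ioi_mem_nhds (hx_pos s hs'))
    exact Filter.Tendsto.const_mul _ ((hfx.tendsto).comp (hx_tendsto s hs'))
  -- fixed point property
  have hfix : ∀ t, t₀ ≤ t → x t = κ * t ^ (-p) * (1 + ∫ s in t₀..t, s ^ p * f (x s)) := by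
    intro t ht
    have hIlim : Filter.Tendsto (fun k => ∫ s in t₀..t, s ^ p * f (S k s)) Filter.atTop
        (nhds (∫ s in t₀..t, s ^ p * f (x s))) := by
      apply intervalIntegral.tendsto_integral_filter_of_dominated_convergence
        (fun s => s ^ p * f (z s))
      · exact Filter.Eventually.of_forall (hmeas_Sk t ht)
      · apply Filter.Eventually.of_forall
        intro k
        apply Filter.Eventually.of_forall
        intro s hs
        have hs' : t₀ ≤ s := hsub t ht hs
        have hsp : (0:ℝ) < s := lt_of_lt_of_le ht₀ hs'
        rw [Real.norm_eq_abs, abs_of_nonneg (mul_nonneg (hrpos s hsp p).le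
          (hfpos _ (hSpos k s hs')).le)]
        exact mul_le_mul_of_nonneg_left
          (hmono _ _ (hSpos k s hs') ((hInv k).2 s hs').2) (hrpos s hsp p).le
      · exact hII z (hIc z hz_cont hz_pos) t ht
      · exact Filter.Eventually.of_forall (hlim_int t ht)
    have h1 : Filter.Tendsto (fun k => S (k+1) t) Filter.atTop (nhds (x t)) :=
      (hx_tendsto t ht).comp (Filter.tendsto_add_atTop_nat 1)
    have h2 : Filter.Tendsto (fun k => S (k+1) t) Filter.atTop
        (nhds (κ * t ^ (-p) * (1 + ∫ s in t₀..t, s ^ p * f (x s)))) := by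
      have heq : (fun k => S (k+1) t)
          = fun k => κ * t ^ (-p) * (1 + ∫ s in t₀..t, s ^ p * f (S k s)) := rfl
      rw [heq]
      exact Filter.Tendsto.const_mul _ (hIlim.const_add 1)
    exact tendsto_nhds_unique h1 h2
  -- integrability of the limit integrand
  have hmeas_x : ∀ t, t₀ ≤ t → AEStronglyMeasurable (fun s => s ^ p * f (x s))
      (volume.restrict (uIoc t₀ t)) := by
    intro t ht
    exact aestronglyMeasurable_of_tendsto_ae Filter.atTop (hmeas_Sk t ht)
      ((ae_restrict_iff' measurableSet_uIoc).2 (Filter.Eventually.of_forall (hlim_int t ht)))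
  have hxII : ∀ t, t₀ ≤ t → IntervalIntegrable (fun s => s ^ p * f (x s)) volume t₀ t := by
    intro t ht
    rw [intervalIntegrable_iff]
    apply Integrable.mono (intervalIntegrable_iff.1 (hII z (hIc z hz_cont hz_pos) t ht))
      (hmeas_x t ht)
    apply (ae_restrict_iff' measurableSet_uIoc).2
    apply Filter.Eventually.of_forall
    intro s hs
    have hs' : t₀ ≤ s := hsub t ht hs
    have hsp : (0:ℝ) < s := lt_of_lt_of_le ht₀ hs'
    rw [Real.norm_eq_abs, Real.norm_eq_abs,
      abs_of_nonneg (mul_nonneg (hrpos s hsp p).le (hfpos _ (hx_pos s hs')).le),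
      abs_of_nonneg (mul_nonneg (hrpos s hsp p).le (hfpos _ (hz_pos s hs')).le)]
    exact mul_le_mul_of_nonneg_left
      (hmono _ _ (hx_pos s hs') (hx_ub s hs')) (hrpos s hsp p).le
  -- the primitive G
  set G : ℝ → ℝ := fun t => ∫ s in t₀..t, s ^ p * f (x s) with hG_def
  have hGcont : ∀ t, t₀ < t → ContinuousAt G t := by
    intro t ht
    obtain ⟨M, hM⟩ := (isCompact_Icc : IsCompact (Icc t₀ (t+1))).exists_bound_of_continuousOn
      ((hIc z hz_cont hz_pos).mono Icc_subset_Ici_self)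
    have hM0 : 0 ≤ M := le_trans (norm_nonneg _) (hM t ⟨ht.le, by linarith⟩)
    have hL : ∀ a ∈ Icc t₀ (t+1), ∀ b ∈ Icc t₀ (t+1), dist (G a) (G b) ≤ M * dist a b := by
      intro a ha b hb
      rw [Real.dist_eq, Real.dist_eq]
      have hdiff : G a - G b = ∫ s in b..a, s ^ p * f (x s) :=
        intervalIntegral.integral_interval_sub_left (hxII a ha.1) (hxII b hb.1)
      rw [hdiff]
      have hbound : ∀ s ∈ uIoc b a, ‖s ^ p * f (x s)‖ ≤ M := by
        intro s hs
        have hs1 : s ∈ Icc t₀ (t+1) := by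
          have h1 : uIoc b a ⊆ Icc (min b a) (max b a) := Ioc_subset_Icc_self
          have h2 := h1 hs
          constructor
          · exact le_trans (le_min hb.1 ha.1) h2.1
          · exact le_trans h2.2 (max_le hb.2 ha.2)
        have hs' : t₀ ≤ s := hs1.1
        have hsp : (0:ℝ) < s := lt_of_lt_of_le ht₀ hs'
        calc ‖s ^ p * f (x s)‖ = s ^ p * f (x s) := by
              rw [Real.norm_eq_abs, abs_of_nonneg (mul_nonneg (hrpos s hsp p).le
                (hfpos _ (hx_pos s hs')).le)]
          _ ≤ s ^ p * f (z s) := mul_le_mul_of_nonneg_left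
              (hmono _ _ (hx_pos s hs') (hx_ub s hs')) (hrpos s hsp p).le
          _ ≤ ‖s ^ p * f (z s)‖ := le_abs_self _
          _ ≤ M := hM s hs1
      calc |∫ s in b..a, s ^ p * f (x s)| ≤ M * |a - b| :=
            intervalIntegral.norm_integral_le_of_norm_le_const hbound
        _ = M * |a - b| := rfl
    have hLip : LipschitzOnWith M.toNNReal G (Icc t₀ (t+1)) := by
      apply LipschitzOnWith.of_dist_le_mul
      intro a ha b hb
      rw [Real.coe_toNNReal M hM0]
      exact hL a ha b hb
    exact hLip.continuousOn.continuousAt (Icc_mem_nhds ht (lt_add_one t))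
  -- continuity of x on (t₀, ∞)
  have hx_contAt : ∀ t, t₀ < t → ContinuousAt x t := by
    intro t ht
    have hform : ContinuousAt (fun u => κ * u ^ (-p) * (1 + G u)) t := by
      apply ContinuousAt.mul
      · exact continuousAt_const.mul
          (Real.continuousAt_rpow_const t (-p) (Or.inl (ne_of_gt (lt_trans ht₀ ht))))
      · exact continuousAt_const.add (hGcont t ht)
    apply hform.congr
    filter_upwards [Ioi_mem_nhds ht] with u hu
    exact (hfix u (le_of_lt hu)).symm
  -- continuity of the integrand on (t₀, ∞)
  have hIcx : ContinuousOn (fun s => s ^ p * f (x s)) (Ioi t₀) := by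
    intro s hs
    have hs' : t₀ < s := hs
    apply ContinuousAt.continuousWithinAt
    apply ContinuousAt.mul
    · exact Real.continuousAt_rpow_const s p (Or.inl (ne_of_gt (lt_trans ht₀ hs')))
    · exact (hfc.continuousAt (Ioi_mem_nhds (hx_pos s hs'.le))).comp (hx_contAt s hs')
  -- derivative of G
  have hGderiv : ∀ t, t₀ < t → HasDerivAt G (t ^ p * f (x t)) t := by
    intro t ht
    exact intervalIntegral.integral_hasDerivAt_right (hxII t ht.le)
      (ContinuousOn.stronglyMeasurableAtFilter isOpen_Ioi hIcx t ht)
      ((hIcx t ht).continuousAt (Ioi_mem_nhds ht))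
  -- derivative of x
  have hx_deriv : ∀ t, t₀ < t →
      HasDerivAt x (κ * (-p * t ^ (-p - 1)) * (1 + G t)
        + κ * t ^ (-p) * (t ^ p * f (x t))) t := by
    intro t ht
    have h1 : HasDerivAt (fun u : ℝ => κ * u ^ (-p)) (κ * (-p * t ^ (-p - 1))) t :=
      (Real.hasDerivAt_rpow_const (Or.inl (ne_of_gt (lt_trans ht₀ ht)))).const_mul κ
    have h2 : HasDerivAt (fun u => 1 + G u) (t ^ p * f (x t)) t := (hGderiv t ht).const_add 1
    have h3 := h1.mul h2
    apply h3.congr_of_eventuallyEq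
    filter_upwards [Ioi_mem_nhds ht] with u hu
    exact hfix u hu.le
  -- rescaling and conclusion
  have hκne : κ ≠ 0 := ne_of_gt hκ
  set t₁ : ℝ := κ * (t₀ + 1) with ht₁_def
  have ht₁pos : 0 < t₁ := mul_pos hκ (by linarith)
  have hdivge : ∀ τ, t₁ ≤ τ → t₀ + 1 ≤ τ / κ := by
    intro τ hτ
    rw [le_div_iff₀ hκ]
    linarith
  have hdivgt : ∀ τ, t₁ ≤ τ → t₀ < τ / κ := fun τ hτ =>
    lt_of_lt_of_le (by linarith) (hdivge τ hτ)
  refine hblow t₁ (x (t₁ / κ)) ht₁pos ?_ (fun τ => x (τ / κ)) rfl ?_ ?_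
  · exact hx_pos _ (hdivgt t₁ le_rfl).le
  · intro τ hτ
    exact hx_pos _ (hdivgt τ hτ).le
  · intro τ hτ
    have htq : t₀ < τ / κ := hdivgt τ hτ
    have htpos : (0:ℝ) < τ / κ := lt_trans ht₀ htq
    have hτpos : (0:ℝ) < τ := lt_of_lt_of_le ht₁pos hτ
    have hx' := hx_deriv (τ / κ) htq
    have hdiv : HasDerivAt (fun τ : ℝ => τ / κ) (1 / κ) τ := (hasDerivAt_id τ).div_const κ
    have hcomp : HasDerivAt (fun τ => x (τ / κ))
        ((κ * (-p * (τ/κ) ^ (-p - 1)) * (1 + G (τ/κ))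
          + κ * (τ/κ) ^ (-p) * ((τ/κ) ^ p * f (x (τ/κ)))) * (1 / κ)) τ := by
      have h0 := HasDerivAt.comp (x := τ) hx' hdiv
      exact h0
    have hval : (κ * (-p * (τ/κ) ^ (-p - 1)) * (1 + G (τ/κ))
          + κ * (τ/κ) ^ (-p) * ((τ/κ) ^ p * f (x (τ/κ)))) * (1 / κ)
        = f (x (τ/κ)) - n / (α * τ) * x (τ/κ) := by
      have hfix' := hfix (τ/κ) htq.le
      rw [hfix']
      have h02 : (τ/κ) ^ (-p - 1) = ((τ/κ) ^ p)⁻¹ * (κ / τ) := by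
        rw [show -p - 1 = -p + (-1) by ring, Real.rpow_add htpos,
          Real.rpow_neg htpos.le, Real.rpow_neg_one, inv_div]
      rw [h02, Real.rpow_neg htpos.le p]
      have hdne : ((τ/κ) ^ p : ℝ) ≠ 0 := ne_of_gt (hrpos _ htpos p)
      rw [hp_def]
      field_simp
      ring
    rw [← hval]
    exact hcomp
end
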